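/- Let G be a graph and H an attachment set of size h. Then η(altan(G,H)) ≥ η(G), where η denotes the nullity (dimension of the kernel) of the adjacency matrix. -/

import Mathlib

open scoped Classical

/-- The nullity of a graph: dimension of the kernel of its real adjacency matrix. -/
noncomputable def nullity {V : Type*} [Fintype V] (G : SimpleGraph V) : ℕ :=
  letI := Classical.decEq V
  letI := Classical.decRel G.Adj
  Module.finrank ℝ ↥(LinearMap.ker (Matrix.toLin' (G.adjMatrix ℝ)))

/-- `q` is a kernel eigenvector of `G`: the sum of `q` over each neighbourhood is `0`. -/
def IsKernelVector {V : Type*} [Fintype V] (G : SimpleGraph V) (q : V → ℝ) : Prop :=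
  ∀ v : V, ∑ u : V, (if G.Adj v u then q u else 0) = 0

/-- Underlying relation of the altan construction: vertices are `V ⊕ (Fin h ⊕ Fin h)`,
where `Sum.inr (Sum.inl i)` is `x_{i+1}` and `Sum.inr (Sum.inr i)` is `y_{i+1}`
(0-indexed versions of the 1-indexed `x_i, y_i`). -/
def altanRel {V : Type*} {h : ℕ} [NeZero h] (G : SimpleGraph V) (H : Fin h → V) :
    (V ⊕ (Fin h ⊕ Fin h)) → (V ⊕ (Fin h ⊕ Fin h)) → Prop
  | Sum.inl u, Sum.inl w => G.Adj u w
  | Sum.inl u, Sum.inr (Sum.inl i) => u = H i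
  | Sum.inr (Sum.inl i), Sum.inr (Sum.inr j) => j = i ∨ i = j + 1
  | _, _ => False

/-- The altan of `(G, H)`. -/
def altan {V : Type*} {h : ℕ} [NeZero h] (G : SimpleGraph V) (H : Fin h → V) :
    SimpleGraph (V ⊕ (Fin h ⊕ Fin h)) :=
  SimpleGraph.fromRel (altanRel G H)

/-- The special vector: `s(y_i) = (-1)^i` (1-indexed), `0` elsewhere. -/
def specialVector (V : Type*) (h : ℕ) : (V ⊕ (Fin h ⊕ Fin h)) → ℝ
  | Sum.inr (Sum.inr j) => (-1 : ℝ) ^ ((j : ℕ) + 1)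
  | _ => 0

/-- The induced attachment set `H' = (y_1, ..., y_h)` of the altan. -/
def inducedAttachment (V : Type*) (h : ℕ) : Fin h → (V ⊕ (Fin h ⊕ Fin h)) :=
  fun i => Sum.inr (Sum.inr i)

section adj
variable {V : Type*} {h : ℕ} [NeZero h] (G : SimpleGraph V) (H : Fin h → V)

lemma adj_ll (u w : V) : (altan G H).Adj (.inl u) (.inl w) ↔ G.Adj u w := by
  simp only [altan, SimpleGraph.fromRel_adj, altanRel]
  constructor
  · rintro ⟨-, hr | hr⟩
    · exact hr
    · exact hr.symm
  · intro hr
    refine ⟨?_, Or.inl hr⟩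
    simp only [ne_eq, Sum.inl.injEq]
    exact G.ne_of_adj hr

lemma adj_lx (u : V) (i : Fin h) : (altan G H).Adj (.inl u) (.inr (.inl i)) ↔ u = H i := by
  simp [altan, SimpleGraph.fromRel_adj, altanRel]

lemma adj_xl (u : V) (i : Fin h) : (altan G H).Adj (.inr (.inl i)) (.inl u) ↔ u = H i := by
  rw [SimpleGraph.adj_comm]; exact adj_lx G H u i

lemma adj_ly (u : V) (j : Fin h) : ¬ (altan G H).Adj (.inl u) (.inr (.inr j)) := by
  simp [altan, SimpleGraph.fromRel_adj, altanRel]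

lemma adj_yl (u : V) (j : Fin h) : ¬ (altan G H).Adj (.inr (.inr j)) (.inl u) := by
  rw [SimpleGraph.adj_comm]; exact adj_ly G H u j

lemma adj_xx (i i' : Fin h) : ¬ (altan G H).Adj (.inr (.inl i)) (.inr (.inl i')) := by
  simp [altan, SimpleGraph.fromRel_adj, altanRel]

lemma adj_yy (j j' : Fin h) : ¬ (altan G H).Adj (.inr (.inr j)) (.inr (.inr j')) := by
  simp [altan, SimpleGraph.fromRel_adj, altanRel]

lemma adj_xy (i j : Fin h) :
    (altan G H).Adj (.inr (.inl i)) (.inr (.inr j)) ↔ (j = i ∨ i = j + 1) := by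
  simp [altan, SimpleGraph.fromRel_adj, altanRel]

lemma adj_yx (i j : Fin h) :
    (altan G H).Adj (.inr (.inr j)) (.inr (.inl i)) ↔ (j = i ∨ i = j + 1) := by
  rw [SimpleGraph.adj_comm]; exact adj_xy G H i j

end adj
section fin
variable {h : ℕ} [NeZero h]

lemma fin_one_ne_zero (hh : 2 ≤ h) : (1 : Fin h) ≠ 0 := by
  intro e
  have : ((1 : Fin h) : ℕ) = ((0 : Fin h) : ℕ) := by rw [e]
  have h1 : ((1 : Fin h) : ℕ) = 1 % h := rfl
  have h0 : ((0 : Fin h) : ℕ) = 0 := rfl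
  rw [h1, h0, Nat.mod_eq_of_lt (by omega)] at this
  exact one_ne_zero this

lemma fin_sub_ne (hh : 2 ≤ h) (i : Fin h) : i ≠ i - 1 :=
  fun e => fin_one_ne_zero hh (sub_eq_self.mp e.symm)

example (i : Fin h) : i - 1 + 1 = i := sub_add_cancel i 1
example (i j : Fin h) : i = j + 1 ↔ j = i - 1 := by
  constructor
  · intro e; rw [e]; exact (add_sub_cancel_right j 1).symm
  · intro e; rw [e]; exact (sub_add_cancel i 1).symm
end fin

section ker
variable {V : Type*} [Fintype V] {h : ℕ} [NeZero h] (G : SimpleGraph V) (H : Fin h → V)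
variable [DecidableEq V] [DecidableRel G.Adj]
variable [DecidableEq (V ⊕ (Fin h ⊕ Fin h))] [DecidableRel (altan G H).Adj]

lemma mem_ker_altan (hh : 2 ≤ h) (q : V → ℝ) (c : Fin h → ℝ)
    (hq : q ∈ LinearMap.ker (Matrix.toLin' (G.adjMatrix ℝ)))
    (hc : ∀ i : Fin h, c i + c (i + 1) + q (H (i + 1)) = 0) :
    Sum.elim q (Sum.elim 0 c) ∈ LinearMap.ker (Matrix.toLin' ((altan G H).adjMatrix ℝ)) := by
  rw [LinearMap.mem_ker, Matrix.toLin'_apply] at hq ⊢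
  funext w
  have key : ∀ w', ((altan G H).adjMatrix ℝ).mulVec (Sum.elim q (Sum.elim 0 c)) w'
      = ∑ u, (if (altan G H).Adj w' u then Sum.elim q (Sum.elim 0 c) u else 0) := by
    intro w'
    simp [Matrix.mulVec, dotProduct, SimpleGraph.adjMatrix_apply, ite_mul]
  rw [key, Pi.zero_apply]
  rcases w with v | i | j
  · have hqv : ∑ u, (if G.Adj v u then q u else 0) = 0 := by
      have := congrFun hq v
      simpa [Matrix.mulVec, dotProduct, SimpleGraph.adjMatrix_apply, ite_mul] using this
    rw [Fintype.sum_sum_type]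
    simp only [Fintype.sum_sum_type, Sum.elim_inl, Sum.elim_inr, Pi.zero_apply,
      adj_ll, adj_lx, ite_self, Finset.sum_const_zero, add_zero]
    simpa [fun j => adj_ly G H v j] using hqv
  · -- x_i row
    rw [Fintype.sum_sum_type]
    simp only [Fintype.sum_sum_type, Sum.elim_inl, Sum.elim_inr, Pi.zero_apply,
      adj_xl, adj_xx, adj_xy, ite_self, Finset.sum_const_zero, if_false, zero_add]
    have h1 : ∑ u : V, (if u = H i then q u else 0) = q (H i) := by
      simp [Finset.sum_ite_eq']
    have h2 : ∑ j : Fin h, (if (j = i ∨ i = j + 1) then c j else 0)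
        = c i + c (i - 1) := by
      have hpt : ∀ j : Fin h, (if (j = i ∨ i = j + 1) then c j else 0)
          = (if j = i then c j else 0) + (if j = i - 1 then c j else 0) := by
        intro j
        have hiff : (i = j + 1) ↔ (j = i - 1) := by
          constructor
          · intro e; rw [e]; exact (add_sub_cancel_right j 1).symm
          · intro e; rw [e]; exact (sub_add_cancel i 1).symm
        by_cases e1 : j = i <;> by_cases e2 : j = i - 1
        · exact absurd (e1.symm.trans e2) (fin_sub_ne hh i)
        · rw [if_pos (Or.inl e1), if_pos e1, if_neg e2, add_zero]
        · rw [if_pos (Or.inr (hiff.mpr e2)), if_neg e1, if_pos e2, zero_add]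
        · rw [if_neg (fun he => he.elim e1 (fun e => e2 (hiff.mp e))),
            if_neg e1, if_neg e2, add_zero]
      rw [Finset.sum_congr rfl (fun j _ => hpt j), Finset.sum_add_distrib]
      simp [Finset.sum_ite_eq']
    rw [h1, h2]
    have := hc (i - 1)
    rw [sub_add_cancel] at this
    linarith
  · -- y_j row
    rw [Fintype.sum_sum_type]
    simp [Fintype.sum_sum_type, Sum.elim_inl, Sum.elim_inr, Pi.zero_apply,
      fun u => adj_yl G H u j, adj_yy, adj_yx, ite_self]
end ker

section fin
variable {h : ℕ} [NeZero h]

lemma fin_val_add_one (i : Fin h) (hlt : (i : ℕ) + 1 < h) :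
    ((i + 1 : Fin h) : ℕ) = (i : ℕ) + 1 := by
  have h1 : ((1 : Fin h) : ℕ) = 1 % h := rfl
  have e1 : 1 % h = 1 := Nat.mod_eq_of_lt (by omega)
  rw [Fin.val_add, h1, e1, Nat.mod_eq_of_lt (by omega)]

lemma fin_val_add_one_top (i : Fin h) (hlt : ¬ ((i : ℕ) + 1 < h)) :
    ((i + 1 : Fin h) : ℕ) = 0 := by
  have hi := i.isLt
  have h2 : (i : ℕ) = h - 1 := by omega
  have h1 : ((1 : Fin h) : ℕ) = 1 % h := rfl
  rcases Nat.lt_or_ge 1 h with hlt1 | hge1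
  · have e1 : 1 % h = 1 := Nat.mod_eq_of_lt (by omega)
    rw [Fin.val_add, h1, e1, h2]
    have : h - 1 + 1 = h := by omega
    rw [this, Nat.mod_self]
  · have hh1 : h = 1 := by omega
    subst hh1
    exact Fin.val_eq_zero _

lemma sign_succ (he : Even h) (i : Fin h) :
    (-1 : ℝ) ^ ((i + 1 : Fin h) : ℕ) = -(-1 : ℝ) ^ (i : ℕ) := by
  have hpos : 0 < h := Nat.pos_of_ne_zero (NeZero.ne h)
  by_cases hlt : (i : ℕ) + 1 < h
  · rw [fin_val_add_one i hlt, pow_succ]; ring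
  · have hi := i.isLt
    have h2 : (i : ℕ) = h - 1 := by omega
    rw [fin_val_add_one_top i hlt, pow_zero, h2]
    have hodd : Odd (h - 1) := by
      rcases he with ⟨m, hm⟩
      refine ⟨m - 1, by omega⟩
    rw [Odd.neg_one_pow hodd]; ring

/-- The map `c ↦ (i ↦ c i + c (i+1))`. -/
noncomputable def Dmap (h : ℕ) [NeZero h] : (Fin h → ℝ) →ₗ[ℝ] (Fin h → ℝ) :=
  LinearMap.pi (fun i => (LinearMap.proj (R := ℝ) (φ := fun _ : Fin h => ℝ) i + LinearMap.proj (R := ℝ) (φ := fun _ : Fin h => ℝ) (i + 1)))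

lemma Dmap_apply (c : Fin h → ℝ) (i : Fin h) : Dmap h c i = c i + c (i + 1) := rfl

lemma ker_D_alt (c : Fin h → ℝ) (hc : ∀ i, c i + c (i + 1) = 0) :
    ∀ (k : ℕ) (hk : k < h), c ⟨k, hk⟩ = (-1 : ℝ) ^ k * c ⟨0, Nat.pos_of_ne_zero (NeZero.ne h)⟩ := by
  intro k
  induction k with
  | zero => intro hk; simp
  | succ n ih =>
    intro hk
    have hn : n < h := by omega
    have hstep := hc ⟨n, hn⟩
    have he : (⟨n, hn⟩ : Fin h) + 1 = ⟨n + 1, hk⟩ := by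
      apply Fin.ext
      rw [fin_val_add_one ⟨n, hn⟩ (by simpa using hk)]
    rw [he] at hstep
    have := ih hn
    rw [pow_succ]
    linarith [hstep, this]

/-- The alternating vector. -/
def altv (h : ℕ) : Fin h → ℝ := fun i => (-1 : ℝ) ^ (i : ℕ)

lemma D_inj (hh : 2 ≤ h) (ho : Odd h) : Function.Injective (Dmap h) := by
  rw [← LinearMap.ker_eq_bot]
  rw [Submodule.eq_bot_iff]
  intro c hc
  rw [LinearMap.mem_ker] at hc
  have hc' : ∀ i, c i + c (i + 1) = 0 := fun i => by
    have := congrFun hc i; rw [Dmap_apply] at this; exact this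
  have hpos : 0 < h := by omega
  have hz : c ⟨0, hpos⟩ = 0 := by
    have hlast : h - 1 < h := by omega
    have hstep := hc' ⟨h - 1, hlast⟩
    have he : (⟨h - 1, hlast⟩ : Fin h) + 1 = ⟨0, hpos⟩ := by
      apply Fin.ext
      rw [fin_val_add_one_top ⟨h - 1, hlast⟩ (by simp; omega)]
    rw [he] at hstep
    have hval := ker_D_alt c hc' (h - 1) hlast
    have heven : Even (h - 1) := by
      rcases ho with ⟨m, hm⟩; exact ⟨m, by omega⟩
    rw [Even.neg_one_pow heven, one_mul] at hval
    linarith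
  funext i
  have := ker_D_alt c hc' i.val i.isLt
  rw [Fin.eta] at this
  rw [this, hz, mul_zero, Pi.zero_apply]

lemma altv_mem_kerD (he : Even h) : altv h ∈ LinearMap.ker (Dmap h) := by
  rw [LinearMap.mem_ker]
  funext i
  rw [Dmap_apply, Pi.zero_apply]
  show (-1 : ℝ) ^ (i : ℕ) + (-1 : ℝ) ^ ((i + 1 : Fin h) : ℕ) = 0
  rw [sign_succ he]; ring

lemma kerD_le (hh : 2 ≤ h) : LinearMap.ker (Dmap h) ≤ Submodule.span ℝ {altv h} := by
  intro c hc
  rw [LinearMap.mem_ker] at hc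
  have hc' : ∀ i, c i + c (i + 1) = 0 := fun i => by
    have := congrFun hc i; rw [Dmap_apply] at this; exact this
  have hpos : 0 < h := by omega
  rw [Submodule.mem_span_singleton]
  refine ⟨c ⟨0, hpos⟩, funext fun i => ?_⟩
  have := ker_D_alt c hc' i.val i.isLt
  rw [Fin.eta] at this
  rw [Pi.smul_apply, smul_eq_mul, this, altv]
  ring

lemma shift_sum (he : Even h) (f : Fin h → ℝ) :
    ∑ i : Fin h, (-1 : ℝ) ^ (i : ℕ) * f (i + 1) = - ∑ j : Fin h, (-1 : ℝ) ^ (j : ℕ) * f j := by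
  have hpt : ∀ i : Fin h, (-1 : ℝ) ^ (i : ℕ) * f (i + 1)
      = -((-1 : ℝ) ^ ((i + 1 : Fin h) : ℕ) * f (i + 1)) := by
    intro i; rw [sign_succ he]; ring
  rw [Finset.sum_congr rfl (fun i _ => hpt i), Finset.sum_neg_distrib, neg_inj]
  exact Fintype.sum_equiv (Equiv.addRight (1 : Fin h))
    (fun i => (-1 : ℝ) ^ ((i + 1 : Fin h) : ℕ) * f (i + 1))
    (fun j => (-1 : ℝ) ^ (j : ℕ) * f j) (fun i => rfl)

/-- Alternating-sum functional on `Fin h → ℝ`. -/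
noncomputable def T2 (h : ℕ) [NeZero h] : (Fin h → ℝ) →ₗ[ℝ] ℝ :=
  ∑ i : Fin h, ((-1 : ℝ) ^ (i : ℕ)) • (LinearMap.proj i : (Fin h → ℝ) →ₗ[ℝ] ℝ)

lemma T2_apply (b : Fin h → ℝ) : T2 h b = ∑ i : Fin h, (-1 : ℝ) ^ (i : ℕ) * b i := by
  simp [T2, LinearMap.sum_apply, LinearMap.smul_apply, smul_eq_mul]

lemma rangeD_le (he : Even h) : LinearMap.range (Dmap h) ≤ LinearMap.ker (T2 h) := by
  rintro b ⟨c, rfl⟩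
  rw [LinearMap.mem_ker, T2_apply]
  have : ∀ i : Fin h, (-1 : ℝ) ^ (i : ℕ) * Dmap h c i
      = (-1 : ℝ) ^ (i : ℕ) * c i + (-1 : ℝ) ^ (i : ℕ) * c (i + 1) := by
    intro i; rw [Dmap_apply]; ring
  rw [Finset.sum_congr rfl (fun i _ => this i), Finset.sum_add_distrib, shift_sum he]
  ring

lemma T2_surj (hh : 2 ≤ h) : Function.Surjective (T2 h) := by
  intro r
  refine ⟨r • Pi.single (M := fun _ : Fin h => ℝ) 0 1, ?_⟩
  rw [T2_apply]
  have : ∀ i : Fin h, (-1 : ℝ) ^ (i : ℕ) * (r • Pi.single (M := fun _ : Fin h => ℝ) 0 1) i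
      = if i = 0 then r else 0 := by
    intro i
    rw [Pi.smul_apply, Pi.single_apply, smul_eq_mul]
    by_cases e : i = 0
    · subst e; simp
    · simp [e]
  rw [Finset.sum_congr rfl (fun i _ => this i), Finset.sum_ite_eq' Finset.univ (0 : Fin h)]
  simp

lemma finrank_kerT2 (hh : 2 ≤ h) :
    Module.finrank ℝ ↥(LinearMap.ker (T2 h)) = h - 1 := by
  have := LinearMap.finrank_range_add_finrank_ker (T2 h)
  rw [LinearMap.range_eq_top.mpr (T2_surj hh), finrank_top, Module.finrank_self,
    Module.finrank_fintype_fun_eq_card, Fintype.card_fin] at this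
  omega

lemma rangeD_eq (hh : 2 ≤ h) (he : Even h) :
    LinearMap.range (Dmap h) = LinearMap.ker (T2 h) := by
  refine Submodule.eq_of_le_of_finrank_le (rangeD_le he) ?_
  have h1 := LinearMap.finrank_range_add_finrank_ker (Dmap h)
  rw [Module.finrank_fintype_fun_eq_card, Fintype.card_fin] at h1
  have hker : LinearMap.ker (Dmap h) = Submodule.span ℝ {altv h} :=
    le_antisymm (kerD_le hh) ((Submodule.span_singleton_le_iff_mem _ _).mpr (altv_mem_kerD he))
  have haltne : altv h ≠ 0 := by
    intro e
    have := congrFun e ⟨0, by omega⟩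
    simp [altv] at this
  rw [hker, finrank_span_singleton haltne] at h1
  rw [finrank_kerT2 hh]
  omega
end fin


open Module

lemma nullity_eq' {V : Type*} [Fintype V] [DecidableEq V] (G : SimpleGraph V)
    [DecidableRel G.Adj] :
    nullity G = Module.finrank ℝ ↥(LinearMap.ker (Matrix.toLin' (G.adjMatrix ℝ))) := by
  unfold nullity
  congr!

lemma main_le {V : Type*} [Fintype V] {h : ℕ} [NeZero h] (hh : 2 ≤ h)
    (G : SimpleGraph V) (H : Fin h → V)
    [DecidableEq V] [DecidableRel G.Adj]
    [DecidableEq (V ⊕ (Fin h ⊕ Fin h))] [DecidableRel (altan G H).Adj] :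
    Module.finrank ℝ ↥(LinearMap.ker (Matrix.toLin' (G.adjMatrix ℝ)))
      ≤ Module.finrank ℝ ↥(LinearMap.ker (Matrix.toLin' ((altan G H).adjMatrix ℝ))) := by
  set KG := LinearMap.ker (Matrix.toLin' (G.adjMatrix ℝ)) with hKG
  set K := LinearMap.ker (Matrix.toLin' ((altan G H).adjMatrix ℝ)) with hK
  set px : ((V ⊕ (Fin h ⊕ Fin h)) → ℝ) →ₗ[ℝ] (Fin h → ℝ) :=
    LinearMap.funLeft ℝ ℝ (fun i : Fin h => Sum.inr (Sum.inl i)) with hpx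
  set Z := K ⊓ LinearMap.ker px with hZdef
  set π : ↥Z →ₗ[ℝ] (V → ℝ) :=
    (LinearMap.funLeft ℝ ℝ (Sum.inl : V → V ⊕ (Fin h ⊕ Fin h))).comp Z.subtype with hπ
  have hmem : ∀ q ∈ KG, ∀ c : Fin h → ℝ, (∀ i, c i + c (i + 1) + q (H (i + 1)) = 0) →
      q ∈ LinearMap.range π := by
    intro q hq c hc
    have hpZ : Sum.elim q (Sum.elim 0 c) ∈ Z := by
      refine Submodule.mem_inf.mpr ⟨mem_ker_altan G H hh q c hq hc, ?_⟩
      rw [LinearMap.mem_ker]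
      funext i
      rfl
    exact ⟨⟨_, hpZ⟩, funext fun v => rfl⟩
  have hZK : finrank ℝ ↥Z ≤ finrank ℝ ↥K := Submodule.finrank_mono inf_le_left
  have hrn := LinearMap.finrank_range_add_finrank_ker π
  rcases Nat.even_or_odd h with he | ho
  · -- even case
    set T : (V → ℝ) →ₗ[ℝ] ℝ :=
      ∑ i : Fin h, ((-1 : ℝ) ^ (i : ℕ)) •
        (LinearMap.proj (R := ℝ) (φ := fun _ : V => ℝ) (H i)) with hT
    have hTapp : ∀ q : V → ℝ, T q = ∑ i : Fin h, (-1 : ℝ) ^ (i : ℕ) * q (H i) := by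
      intro q
      simp [hT, LinearMap.sum_apply, LinearMap.smul_apply, smul_eq_mul]
    set Tr := T.comp KG.subtype with hTr
    have h1 := LinearMap.finrank_range_add_finrank_ker Tr
    have h2 : finrank ℝ ↥(LinearMap.range Tr) ≤ 1 := by
      have := Submodule.finrank_le (LinearMap.range Tr)
      rwa [Module.finrank_self] at this
    have h3 : finrank ℝ ↥(LinearMap.ker Tr) ≤ finrank ℝ ↥(LinearMap.range π) := by
      have hle : Submodule.map KG.subtype (LinearMap.ker Tr) ≤ LinearMap.range π := by
        rintro q hqm
        obtain ⟨x, hx, rfl⟩ := hqm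
        have hx' : T (KG.subtype x) = 0 := hx
        have hb : (fun i : Fin h => -((KG.subtype x) (H (i + 1)))) ∈ LinearMap.ker (T2 h) := by
          rw [LinearMap.mem_ker, T2_apply]
          have hpt : ∀ i : Fin h, (-1 : ℝ) ^ (i : ℕ) * (-((KG.subtype x) (H (i + 1))))
              = -((-1 : ℝ) ^ (i : ℕ) * (KG.subtype x) (H (i + 1))) := fun i => by ring
          rw [Finset.sum_congr rfl (fun i _ => hpt i), Finset.sum_neg_distrib,
            shift_sum he (fun m => KG.subtype x (H m)), neg_neg, ← hTapp]
          exact hx'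
        rw [← rangeD_eq hh he] at hb
        obtain ⟨c, hc⟩ := hb
        refine hmem _ x.2 c fun i => ?_
        have hci := congrFun hc i
        rw [Dmap_apply] at hci
        linarith [hci]
      calc finrank ℝ ↥(LinearMap.ker Tr)
          = finrank ℝ ↥(Submodule.map KG.subtype (LinearMap.ker Tr)) :=
            (Submodule.finrank_map_subtype_eq _ _).symm
        _ ≤ finrank ℝ ↥(LinearMap.range π) := Submodule.finrank_mono hle
    have h4 : 1 ≤ finrank ℝ ↥(LinearMap.ker π) := by
      have hz0 : Sum.elim (0 : V → ℝ) (Sum.elim 0 (altv h)) ∈ Z := by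
        refine Submodule.mem_inf.mpr ⟨mem_ker_altan G H hh 0 (altv h) (Submodule.zero_mem _) ?_, ?_⟩
        · intro i
          have halt : altv h i + altv h (i + 1) = 0 := by
            show (-1 : ℝ) ^ (i : ℕ) + (-1 : ℝ) ^ ((i + 1 : Fin h) : ℕ) = 0
            rw [sign_succ he]; ring
          simpa using halt
        · rw [LinearMap.mem_ker]; funext i; rfl
      set zz : ↥Z := ⟨_, hz0⟩ with hzz
      have hzker : zz ∈ LinearMap.ker π := by
        rw [LinearMap.mem_ker]; funext v; rfl
      have hzne : zz ≠ 0 := by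
        intro e
        have e2 : Sum.elim (0 : V → ℝ) (Sum.elim 0 (altv h)) = 0 := congrArg Subtype.val e
        have e3 := congrFun e2 (Sum.inr (Sum.inr (0 : Fin h)))
        simp [altv] at e3
      calc (1 : ℕ) = finrank ℝ ↥(Submodule.span ℝ {zz}) := (finrank_span_singleton hzne).symm
        _ ≤ finrank ℝ ↥(LinearMap.ker π) :=
            Submodule.finrank_mono ((Submodule.span_singleton_le_iff_mem _ _).mpr hzker)
    omega
  · -- odd case
    have hsurj : Function.Surjective (Dmap h) :=
      LinearMap.injective_iff_surjective.mp (D_inj hh ho)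
    have hKGle : KG ≤ LinearMap.range π := by
      intro q hq
      obtain ⟨c, hc⟩ := hsurj (fun i => -(q (H (i + 1))))
      refine hmem q hq c fun i => ?_
      have hci := congrFun hc i
      rw [Dmap_apply] at hci
      linarith [hci]
    have := Submodule.finrank_mono hKGle
    omega

/-- the nullity of the altan is at least the nullity of the parent. -/
theorem stmt1 {V : Type*} [Fintype V] {h : ℕ} [NeZero h] (hh : 2 ≤ h)
    (G : SimpleGraph V) (H : Fin h → V) :
    nullity G ≤ nullity (altan G H) := by
  letI : DecidableEq V := Classical.decEq V
  letI : DecidableRel G.Adj := Classical.decRel G.Adj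
  letI : DecidableEq (V ⊕ (Fin h ⊕ Fin h)) := Classical.decEq _
  letI : DecidableRel (altan G H).Adj := Classical.decRel _
  rw [nullity_eq' G, nullity_eq' (altan G H)]
  exact main_le hh G H
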